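/- For n ≥ 2 and an even nonnegative integer b with b' = b/2, the number of nonnegative integer solutions of x_1 + x_2 + ... + x_{n−1} + 2 x_n = b equals ∑_{k=0}^{⌊(n−1)/2⌋} C(n−1, 2k) · C(b'−k+1; n−1), where C(m; n−1) = (1/(n−1)!)·m(m+1)···(m+n−2) if m > 0 and 0 otherwise, and C(n−1, 2k) is the usual binomial coefficient. -/

import Mathlib

/-- `C(m; j)` : equals `(1/j!)·m(m+1)···(m+j-1)` if `m > 0`, and `0` otherwise. -/
def Cm (m : ℤ) (j : ℕ) : ℕ := if 0 < m then Nat.choose (m.toNat + j - 1) j else 0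


open Finset

-- generic finiteness
lemma finite_sol {m t : ℕ} {P : (Fin m → ℕ) × ℕ → Prop}
    (hP : ∀ q, P q → (∀ i, q.1 i ≤ t) ∧ q.2 ≤ t) : Finite {q // P q} := by
  apply Finite.of_injective
    (fun q : {q // P q} =>
      ((fun i => (⟨q.1.1 i, Nat.lt_succ_of_le ((hP q.1 q.2).1 i)⟩ : Fin (t+1))),
        (⟨q.1.2, Nat.lt_succ_of_le (hP q.1 q.2).2⟩ : Fin (t+1))))
  intro q r h
  have h1 := congrArg Prod.fst h
  have h2 := congrArg Prod.snd h
  apply Subtype.ext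
  apply Prod.ext
  · funext i; exact congrArg Fin.val (congrFun h1 i)
  · exact congrArg Fin.val h2

instance inst1 (m k t : ℕ) : Finite {q : (Fin m → ℕ) × ℕ // (∑ i, q.1 i) + q.2 + k = t} := by
  apply finite_sol (t := t)
  rintro ⟨f, y⟩ hq
  constructor
  · intro i
    have : f i ≤ ∑ j, f j := Finset.single_le_sum (fun j _ => Nat.zero_le (f j)) (mem_univ i)
    simp only at hq; show f i ≤ t; omega
  · simp only at hq; show y ≤ t; omega

instance inst0 (m t : ℕ) : Finite {q : (Fin m → ℕ) × ℕ // (∑ i, q.1 i) + q.2 = t} := by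
  apply finite_sol (t := t)
  rintro ⟨f, y⟩ hq
  constructor
  · intro i
    have : f i ≤ ∑ j, f j := Finset.single_le_sum (fun j _ => Nat.zero_le (f j)) (mem_univ i)
    simp only at hq; show f i ≤ t; omega
  · simp only at hq; show y ≤ t; omega

lemma my_card_sigma {ι : Type*} [Fintype ι] (α : ι → Type*) [∀ i, Finite (α i)] :
    Nat.card (Sigma α) = ∑ i, Nat.card (α i) := by
  letI : ∀ i, Fintype (α i) := fun i => Fintype.ofFinite _
  simp [Nat.card_eq_fintype_card, Fintype.card_sigma]

lemma card_comp (m t : ℕ) :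
    Nat.card {q : (Fin m → ℕ) × ℕ // (∑ i, q.1 i) + q.2 = t} = (t + m).choose m := by
  induction m generalizing t with
  | zero =>
    have e : {q : (Fin 0 → ℕ) × ℕ // (∑ i, q.1 i) + q.2 = t} ≃ PUnit.{1} :=
      { toFun := fun _ => PUnit.unit
        invFun := fun _ => ⟨(Fin.elim0, t), by simp⟩
        left_inv := by
          rintro ⟨⟨f, y⟩, h⟩
          simp only [Finset.univ_eq_empty, Finset.sum_empty, Nat.zero_add] at h
          subst h
          apply Subtype.ext
          apply Prod.ext
          · funext i; exact i.elim0
          · rfl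
        right_inv := fun _ => rfl }
    rw [Nat.card_congr e]
    simp
  | succ m ih =>
    have e : {q : (Fin (m+1) → ℕ) × ℕ // (∑ i, q.1 i) + q.2 = t} ≃
        Σ x : Fin (t+1), {q : (Fin m → ℕ) × ℕ // (∑ i, q.1 i) + q.2 = t - x.val} :=
      { toFun := fun q =>
          ⟨⟨q.1.1 0, by
            have h := q.2
            have hs : q.1.1 0 + ∑ i : Fin m, q.1.1 i.succ = ∑ i, q.1.1 i := (Fin.sum_univ_succ q.1.1).symm
            omega⟩,
           ⟨(Fin.tail q.1.1, q.1.2), by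
            have h := q.2
            have hs : q.1.1 0 + ∑ i : Fin m, q.1.1 i.succ = ∑ i, q.1.1 i := (Fin.sum_univ_succ q.1.1).symm
            simp only [Fin.tail]
            omega⟩⟩
        invFun := fun s =>
          ⟨(Fin.cons s.1.val s.2.1.1, s.2.1.2), by
            have h := s.2.2
            have hx : s.1.val ≤ t := by omega
            rw [Fin.sum_univ_succ]
            simp only [Fin.cons_zero, Fin.cons_succ]
            omega⟩
        left_inv := by
          rintro ⟨⟨f, y⟩, h⟩
          apply Subtype.ext
          apply Prod.ext
          · exact Fin.cons_self_tail f
          · rfl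
        right_inv := by
          rintro ⟨x, ⟨⟨g, z⟩, h⟩⟩
          simp
          exact HEq.rfl }
    rw [Nat.card_congr e, my_card_sigma]
    have : ∀ x : Fin (t+1), Nat.card {q : (Fin m → ℕ) × ℕ // (∑ i, q.1 i) + q.2 = t - x.val}
        = (t - x.val + m).choose m := fun x => ih (t - x.val)
    rw [Fintype.sum_congr _ _ this, Fin.sum_univ_eq_sum_range (fun x => (t - x + m).choose m)]
    have h2 : ∑ i ∈ Finset.range (t+1), (t - i + m).choose m
        = ∑ i ∈ Finset.range (t+1), (i + m).choose m := by
      apply Finset.sum_nbij' (fun j => t - j) (fun j => t - j) <;>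
        intros <;> simp_all only [Finset.mem_range] <;> first | omega | (congr 1; omega)
    rw [h2, Nat.sum_range_add_choose t m]
    rfl

lemma card_fiber (m k t : ℕ) :
    Nat.card {q : (Fin m → ℕ) × ℕ // (∑ i, q.1 i) + q.2 + k = t} =
      if k ≤ t then (t - k + m).choose m else 0 := by
  split
  · next h =>
    have e : {q : (Fin m → ℕ) × ℕ // (∑ i, q.1 i) + q.2 + k = t} ≃
        {q : (Fin m → ℕ) × ℕ // (∑ i, q.1 i) + q.2 = t - k} :=
      Equiv.subtypeEquivRight (fun q => by omega)
    rw [Nat.card_congr e, card_comp]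
  · next h =>
    have : IsEmpty {q : (Fin m → ℕ) × ℕ // (∑ i, q.1 i) + q.2 + k = t} := by
      constructor; rintro ⟨⟨f, y⟩, hq⟩; simp only at hq; omega
    simp [Nat.card_eq_zero]

lemma key_parity (m : ℕ) (f : Fin m → ℕ) :
    ∑ i, f i = 2 * ∑ i, f i / 2 + (Finset.univ.filter fun i => f i % 2 = 1).card := by
  rw [Finset.card_filter, Finset.mul_sum, ← Finset.sum_add_distrib]
  exact Finset.sum_congr rfl fun i _ => by split <;> omega

lemma sum_indicator (m : ℕ) (g : Fin m → ℕ) (S : Finset (Fin m)) :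
    ∑ i, (2 * g i + if i ∈ S then 1 else 0) = 2 * ∑ i, g i + S.card := by
  rw [Finset.sum_add_distrib, ← Finset.mul_sum]
  congr 1
  rw [Finset.sum_ite_mem, Finset.univ_inter]
  simp

lemma main_equiv (m B : ℕ) :
    Nat.card {p : (Fin m → ℕ) × ℕ // (∑ i, p.1 i) + 2 * p.2 = 2 * B} =
      Nat.card (Σ S : {S : Finset (Fin m) // Even S.card},
        {q : (Fin m → ℕ) × ℕ // (∑ i, q.1 i) + q.2 + S.1.card / 2 = B}) := by
  apply Nat.card_congr
  exact
  { toFun := fun p =>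
      ⟨⟨Finset.univ.filter fun i => p.1.1 i % 2 = 1, by
          obtain ⟨⟨f, y⟩, h⟩ := p
          have hk := key_parity m f
          simp only at h
          show Even (Finset.univ.filter fun i => f i % 2 = 1).card
          rw [Nat.even_iff]
          omega⟩,
        ⟨((fun i => p.1.1 i / 2), p.1.2), by
          obtain ⟨⟨f, y⟩, h⟩ := p
          have hk := key_parity m f
          simp only at h
          show (∑ i, f i / 2) + y + (Finset.univ.filter fun i => f i % 2 = 1).card / 2 = B
          omega⟩⟩
    invFun := fun s =>
      ⟨((fun i => 2 * s.2.1.1 i + if i ∈ s.1.1 then 1 else 0), s.2.1.2), by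
        obtain ⟨⟨S, hS⟩, ⟨⟨g, z⟩, hq⟩⟩ := s
        simp only
        have hsum := sum_indicator m g S
        rw [Nat.even_iff] at hS
        simp only at hq
        omega⟩
    left_inv := by
      rintro ⟨⟨f, y⟩, h⟩
      apply Subtype.ext
      apply Prod.ext
      · funext i
        simp only [Finset.mem_filter, Finset.mem_univ, true_and]
        split <;> omega
      · rfl
    right_inv := by
      rintro ⟨⟨S, hS⟩, ⟨⟨g, z⟩, hq⟩⟩
      have hfil : (Finset.univ.filter fun i =>
          (2 * g i + if i ∈ S then 1 else 0) % 2 = 1) = S := by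
        ext i
        simp only [Finset.mem_filter, Finset.mem_univ, true_and]
        by_cases hi : i ∈ S <;> simp [hi] <;> omega
      have hdiv : (fun i => (2 * g i + if i ∈ S then 1 else 0) / 2) = g := by
        funext i
        by_cases hi : i ∈ S <;> simp [hi] <;> omega
      have key : ∀ (S' : Finset (Fin m)) (h1 : S' = S) (hS' : Even S'.card)
          (g' : Fin m → ℕ) (h2 : g' = g)
          (hq' : (∑ i, g' i) + z + S'.card / 2 = B),
          (⟨⟨S', hS'⟩, ⟨(g', z), hq'⟩⟩ :
            Σ T : {T : Finset (Fin m) // Even T.card},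
              {q : (Fin m → ℕ) × ℕ // (∑ i, q.1 i) + q.2 + T.1.card / 2 = B}) =
            ⟨⟨S, hS⟩, ⟨(g, z), hq⟩⟩ := by
        rintro S' rfl hS' g' rfl hq'
        rfl
      exact key _ hfil _ _ hdiv _ }

theorem stmt12 (n : ℕ) (hn : 2 ≤ n) (b : ℕ) (hb : Even b) :
    Nat.card {p : (Fin (n - 1) → ℕ) × ℕ // (∑ i, p.1 i) + 2 * p.2 = b} =
      ∑ k ∈ Finset.range ((n - 1) / 2 + 1),
        Nat.choose (n - 1) (2 * k) * Cm ((b / 2 : ℕ) - (k : ℤ) + 1) (n - 1) := by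
  obtain ⟨c, rfl⟩ := hb
  rw [show c + c = 2 * c from by omega, show 2 * c / 2 = c from by omega]
  have hm : 1 ≤ n - 1 := by omega
  have hCm : ∀ k : ℕ, Cm ((c : ℤ) - (k : ℤ) + 1) (n - 1) =
      if k ≤ c then (c - k + (n - 1)).choose (n - 1) else 0 := by
    intro k
    rw [Cm]
    by_cases hk : k ≤ c
    · rw [if_pos (by omega), if_pos hk]
      congr 1
      have h1 : ((c : ℤ) - (k : ℤ) + 1) = ((c - k + 1 : ℕ) : ℤ) := by omega
      rw [h1, Int.toNat_natCast]
      omega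
    · rw [if_neg (by omega), if_neg hk]
  rw [main_equiv (n - 1) c, my_card_sigma]
  have hfib : ∀ S : {S : Finset (Fin (n - 1)) // Even S.card},
      Nat.card {q : (Fin (n - 1) → ℕ) × ℕ // (∑ i, q.1 i) + q.2 + S.1.card / 2 = c}
      = if S.1.card / 2 ≤ c then (c - S.1.card / 2 + (n - 1)).choose (n - 1) else 0 :=
    fun S => card_fiber _ _ _
  rw [Fintype.sum_congr _ _ hfib]
  rw [← Finset.sum_subtype (Finset.univ.filter fun S : Finset (Fin (n - 1)) => Even S.card)
    (fun S => by simp) (fun S => if S.card / 2 ≤ c then (c - S.card / 2 + (n - 1)).choose (n - 1) else 0)]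
  rw [Finset.sum_filter, ← Finset.powerset_univ, Finset.sum_powerset]
  have hinner : ∀ j ∈ Finset.range ((Finset.univ : Finset (Fin (n - 1))).card + 1),
      (∑ t ∈ Finset.powersetCard j (Finset.univ : Finset (Fin (n - 1))),
        if Even t.card then (if t.card / 2 ≤ c then (c - t.card / 2 + (n - 1)).choose (n - 1) else 0) else 0)
      = (n - 1).choose j *
          (if Even j then (if j / 2 ≤ c then (c - j / 2 + (n - 1)).choose (n - 1) else 0) else 0) := by
    intro j _
    rw [Finset.sum_powersetCard j Finset.univ
      (fun d => if Even d then (if d / 2 ≤ c then (c - d / 2 + (n - 1)).choose (n - 1) else 0) else 0)]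
    rw [Finset.card_univ, Fintype.card_fin, smul_eq_mul]
  rw [Finset.sum_congr rfl hinner, Finset.card_univ, Fintype.card_fin]
  have hite : ∀ j ∈ Finset.range ((n - 1) + 1),
      (n - 1).choose j *
          (if Even j then (if j / 2 ≤ c then (c - j / 2 + (n - 1)).choose (n - 1) else 0) else 0)
      = if Even j then (n - 1).choose j *
          (if j / 2 ≤ c then (c - j / 2 + (n - 1)).choose (n - 1) else 0) else 0 := by
    intro j _
    split <;> simp
  rw [Finset.sum_congr rfl hite, ← Finset.sum_filter]
  apply Finset.sum_nbij' (fun j => j / 2) (fun k => 2 * k)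
  · intro a ha
    simp only [Finset.mem_filter, Finset.mem_range] at ha
    simp only [Finset.mem_range]
    omega
  · intro a ha
    simp only [Finset.mem_range] at ha
    simp only [Finset.mem_filter, Finset.mem_range]
    refine ⟨by omega, ⟨a, by omega⟩⟩
  · intro a ha
    simp only [Finset.mem_filter, Finset.mem_range] at ha
    obtain ⟨-, x, hx⟩ := ha
    omega
  · intro a _
    omega
  · intro a ha
    simp only [Finset.mem_filter, Finset.mem_range] at ha
    obtain ⟨-, x, hx⟩ := ha
    rw [hCm (a / 2)]
    congr 2
    omega
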